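/- In the half-biased setting, the two error terms are equal in magnitude: |P̃(x*) − P(x*)| = |P̃(x̂) − P(x̂)| = Q(x*)·Q(x̂)·|e| / (α·α̃), where α = 1/M and α̃ = α + Q(x̂)e. -/

import Mathlib

lemma half_biased_helper (Ps Ph Qs Qh M αt e : ℝ) (hQs : 0 < Qs) (hQh : 0 < Qh)
    (hM : 0 < M) (hMQ : Ps = M * Qs) (hsum : Ph = 1 - Ps)
    (hαt : αt = 1 / M + Qh * e) (hαtpos : 0 < αt) :
    |Qs * 1 / αt - Ps| = Qs * Qh * |e| / ((1 / M) * αt) ∧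
    |Qh * (Ph / (M * Qh) + e) / αt - Ph| = Qs * Qh * |e| / ((1 / M) * αt) := by
  have hMne : M ≠ 0 := hM.ne'
  have hαtne : αt ≠ 0 := hαtpos.ne'
  have hQhne : Qh ≠ 0 := hQh.ne'
  have habs : |(M * Qs * Qh * e) / αt| = Qs * Qh * |e| / ((1 / M) * αt) := by
    rw [abs_div, abs_of_pos hαtpos, abs_mul, abs_mul, abs_mul, abs_of_pos hM,
      abs_of_pos hQs, abs_of_pos hQh]
    field_simp
  constructor
  · have h1 : Qs * 1 / αt - Ps = -((M * Qs * Qh * e) / αt) := by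
      rw [← neg_div, div_sub' hαtne, div_eq_div_iff hαtne hαtne, hMQ, hαt]
      field_simp
      ring
    rw [h1, abs_neg, habs]
  · have h2 : Qh * (Ph / (M * Qh) + e) / αt - Ph = (M * Qs * Qh * e) / αt := by
      rw [div_sub' hαtne, div_eq_div_iff hαtne hαtne, hsum, hMQ, hαt]
      field_simp
      ring
    rw [h2, habs]

/-- In the half-biased setting the two pointwise errors agree:
|P̃(x*)−P(x*)| = |P̃(x̂)−P(x̂)| = Q(x*)Q(x̂)|e|/(αα̃). -/
theorem half_biased_error_symmetry (p q e M α αt : ℝ) (P Q A At : Bool → ℝ)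
    (hp0 : 0 ≤ p) (hp1 : p ≤ 1) (hq0 : 0 < q) (hq1 : q < 1) (hpq : p ≠ q)
    (hP : P = fun x => if x then p else 1 - p)
    (hQ : Q = fun x => if x then q else 1 - q)
    (hM : M = max (p / q) ((1 - p) / (1 - q)))
    (hA : A = fun x => P x / (M * Q x))
    (xstar xhat : Bool) (hne : xstar ≠ xhat)
    (hAstar : A xstar = 1) (hAhat : A xhat < 1)
    (hAtstar : At xstar = 1) (hAthat : At xhat = A xhat + e)
    (hα : α = 1 / M) (hαt : αt = α + Q xhat * e) (hαtpos : 0 < αt) :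
    |Q xstar * At xstar / αt - P xstar| = Q xstar * Q xhat * |e| / (α * αt) ∧
    |Q xhat * At xhat / αt - P xhat| = Q xstar * Q xhat * |e| / (α * αt) := by
  subst hP hQ hA hα hαt
  rw [hAtstar, hAthat]
  have hq1' : (0:ℝ) < 1 - q := by linarith
  cases xstar <;> cases xhat
  · exact absurd rfl hne
  · -- xstar = false, xhat = true
    have hAstar' : (1 - p) / (M * (1 - q)) = 1 := hAstar
    have hMQne : M * (1 - q) ≠ 0 := by
      intro h; rw [h, div_zero] at hAstar'; exact zero_ne_one hAstar'
    have hPs : 1 - p = M * (1 - q) := by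
      rw [div_eq_one_iff_eq hMQne] at hAstar'; exact hAstar'
    have hMpos : 0 < M := by
      have h0 : 0 < M * (1 - q) :=
        ((hPs ▸ (by linarith : (0:ℝ) ≤ 1 - p))).lt_of_ne (Ne.symm hMQne)
      nlinarith
    exact half_biased_helper (1 - p) p (1 - q) q M _ e hq1' hq0 hMpos hPs (by ring) rfl hαtpos
  · -- xstar = true, xhat = false
    have hAstar' : p / (M * q) = 1 := hAstar
    have hMQne : M * q ≠ 0 := by
      intro h; rw [h, div_zero] at hAstar'; exact zero_ne_one hAstar'
    have hPs : p = M * q := by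
      rw [div_eq_one_iff_eq hMQne] at hAstar'; exact hAstar'
    have hMpos : 0 < M := by
      have h0 : 0 < M * q := (hPs ▸ hp0).lt_of_ne (Ne.symm hMQne)
      nlinarith
    exact half_biased_helper p (1 - p) q (1 - q) M _ e hq0 hq1' hMpos hPs (by ring) rfl hαtpos
  · exact absurd rfl hne
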